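/- Let k ≥ 3 be an integer and let G be a 3-connected graph with maximum degree at most k. Let u and v be non-adjacent vertices of G with a common neighbour. Then the set of proper k-colourings of G in which u and v receive the same colour, if non-empty, forms a single Kempe class. -/

import Mathlib

set_option linter.unusedSectionVars false
set_option linter.unusedVariables false
set_option maxHeartbeats 1000000


open SimpleGraph
open scoped Classical

variable {V : Type*}

/-- A proper `k`-colouring of `G`. -/
def IsProperColoring (G : SimpleGraph V) (k : ℕ) (c : V → Fin k) : Prop :=
  ∀ ⦃u v : V⦄, G.Adj u v → c u ≠ c v

/-- `c'` is obtained from `c` by a single Kempe change: the colours `a` and `b` are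
swapped on the connected component (of the subgraph induced by the vertices coloured
`a` or `b`) containing `v0`, and all other vertices keep their colour. -/

def KempeStep (G : SimpleGraph V) (k : ℕ) (c c' : V → Fin k) : Prop :=
  ∃ a b : Fin k, ∃ v0 : {x : V | c x = a ∨ c x = b},
    ∀ v : V, c' v =
      if h : c v = a ∨ c v = b then
        if (G.induce {x : V | c x = a ∨ c x = b}).Reachable v0 ⟨v, h⟩
          then Equiv.swap a b (c v) else c v
      else c v

/-- Two colourings are Kempe equivalent if one is obtained from the other by a finite
sequence of Kempe changes. -/
def KempeEquiv (G : SimpleGraph V) (k : ℕ) (c c' : V → Fin k) : Prop :=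
  Relation.ReflTransGen (KempeStep G k) c c'

/-- The set of all proper `k`-colourings of `G` forms a single Kempe class. -/
def KempeClass (G : SimpleGraph V) (k : ℕ) : Prop :=
  ∀ c c' : V → Fin k, IsProperColoring G k c → IsProperColoring G k c' →
    KempeEquiv G k c c'

/-- `G` is `d`-degenerate: every nonempty set of vertices contains a vertex with at
most `d` neighbours inside the set. -/
def Degenerate (G : SimpleGraph V) (d : ℕ) : Prop :=
  ∀ S : Set V, S.Nonempty → ∃ v ∈ S, (S ∩ G.neighborSet v).ncard ≤ d

/-- `G` is 3-connected: more than 3 vertices, and deleting any at most 2 vertices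
leaves it connected. -/
def ThreeConnected [Fintype V] (G : SimpleGraph V) : Prop :=
  3 < Fintype.card V ∧ ∀ S : Set V, S.ncard ≤ 2 → (G.induce Sᶜ).Connected

namespace KempeAux

open Relation

variable {k : ℕ}

def krel (G : SimpleGraph V) (c : V → Fin k) (a b : Fin k) (p q : V) : Prop :=
  G.Adj p q ∧ (c p = a ∨ c p = b) ∧ (c q = a ∨ c q = b)

lemma krel_symm {G : SimpleGraph V} {c : V → Fin k} {a b : Fin k} {p q : V}
    (h : krel G c a b p q) : krel G c a b q p :=
  ⟨h.1.symm, h.2.2, h.2.1⟩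

lemma rtg_mem {G : SimpleGraph V} {c : V → Fin k} {a b : Fin k} {v0 y : V}
    (h : ReflTransGen (krel G c a b) v0 y) : y = v0 ∨ (c y = a ∨ c y = b) := by
  induction h with
  | refl => exact Or.inl rfl
  | tail h1 h2 ih => exact Or.inr h2.2.2

lemma reachable_induce_iff (G : SimpleGraph V) (c : V → Fin k) (a b : Fin k) (x y : V)
    (hx : c x = a ∨ c x = b) (hy : c y = a ∨ c y = b) :
    (G.induce {z : V | c z = a ∨ c z = b}).Reachable ⟨x, hx⟩ ⟨y, hy⟩ ↔
      ReflTransGen (krel G c a b) x y := by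
  have walkdir : ∀ (p q : {z : V | c z = a ∨ c z = b})
      (_ : (G.induce {z : V | c z = a ∨ c z = b}).Walk p q),
      ReflTransGen (krel G c a b) p.1 q.1 := by
    intro p q w
    induction w with
    | nil => exact ReflTransGen.refl
    | @cons p q r h w ih =>
      exact ReflTransGen.head ⟨h, p.2, q.2⟩ ih
  constructor
  · rintro ⟨w⟩
    exact walkdir _ _ w
  · intro h
    induction h with
    | refl => exact Reachable.refl _
    | @tail p q h1 h2 ih =>
      have hp : c p = a ∨ c p = b := h2.2.1
      have : (G.induce {z : V | c z = a ∨ c z = b}).Adj ⟨p, hp⟩ ⟨q, h2.2.2⟩ := h2.1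
      exact (ih hp).trans this.reachable

lemma kempeStep_iff (G : SimpleGraph V) (c c' : V → Fin k) :
    KempeStep G k c c' ↔ ∃ a b : Fin k, ∃ v0 : V, (c v0 = a ∨ c v0 = b) ∧
      ∀ y, c' y = if ReflTransGen (krel G c a b) v0 y then Equiv.swap a b (c y) else c y := by
  constructor
  · rintro ⟨a, b, ⟨v0, h0⟩, hf⟩
    refine ⟨a, b, v0, h0, fun y => ?_⟩
    rw [hf y]
    by_cases hy : c y = a ∨ c y = b
    · rw [dif_pos hy, reachable_induce_iff G c a b v0 y h0 hy]
    · rw [dif_neg hy, if_neg]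
      intro hr
      rcases rtg_mem hr with h | h
      · exact hy (h ▸ h0)
      · exact hy h
  · rintro ⟨a, b, v0, h0, hf⟩
    refine ⟨a, b, ⟨v0, h0⟩, fun y => ?_⟩
    rw [hf y]
    by_cases hy : c y = a ∨ c y = b
    · rw [dif_pos hy, reachable_induce_iff G c a b v0 y h0 hy]
    · rw [dif_neg hy, if_neg]
      intro hr
      rcases rtg_mem hr with h | h
      · exact hy (h ▸ h0)
      · exact hy h

lemma swap_mem {a b x : Fin k} (h : x = a ∨ x = b) :
    Equiv.swap a b x = a ∨ Equiv.swap a b x = b := by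
  rcases h with h | h <;> rw [h]
  · exact Or.inr (Equiv.swap_apply_left a b)
  · exact Or.inl (Equiv.swap_apply_right a b)

lemma kempeStep_proper {G : SimpleGraph V} {c c' : V → Fin k}
    (h : KempeStep G k c c') (hc : IsProperColoring G k c) : IsProperColoring G k c' := by
  rw [kempeStep_iff] at h
  obtain ⟨a, b, v0, h0, hf⟩ := h
  intro p q hadj
  rw [hf p, hf q]
  have hmem : ∀ {z : V}, ReflTransGen (krel G c a b) v0 z → (c z = a ∨ c z = b) := by
    intro z hz
    rcases rtg_mem hz with h | h
    · exact h ▸ h0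
    · exact h
  by_cases hp : ReflTransGen (krel G c a b) v0 p <;>
    by_cases hq : ReflTransGen (krel G c a b) v0 q
  · rw [if_pos hp, if_pos hq]
    exact fun h => hc hadj (Equiv.injective _ h)
  · rw [if_pos hp, if_neg hq]
    have hqm : ¬ (c q = a ∨ c q = b) := fun hm => hq (hp.tail ⟨hadj, hmem hp, hm⟩)
    intro h
    exact hqm (h ▸ swap_mem (hmem hp))
  · rw [if_neg hp, if_pos hq]
    have hpm : ¬ (c p = a ∨ c p = b) := fun hm => hp (hq.tail ⟨hadj.symm, hmem hq, hm⟩)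
    intro h
    exact hpm (h.symm ▸ swap_mem (hmem hq))
  · rw [if_neg hp, if_neg hq]
    exact hc hadj

lemma kempeEquiv_proper {G : SimpleGraph V} {c c' : V → Fin k}
    (h : KempeEquiv G k c c') (hc : IsProperColoring G k c) : IsProperColoring G k c' := by
  induction h with
  | refl => exact hc
  | tail h1 h2 ih => exact kempeStep_proper h2 ih

lemma kempeStep_update {G : SimpleGraph V} {c : V → Fin k} [DecidableEq V] (x : V) (b : Fin k)
    (hnb : ∀ y, G.Adj x y → (c y ≠ c x ∧ c y ≠ b)) :
    KempeStep G k c (Function.update c x b) := by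
  rw [kempeStep_iff]
  refine ⟨c x, b, x, Or.inl rfl, fun y => ?_⟩
  have hr : ∀ {z : V}, ReflTransGen (krel G c (c x) b) x z → z = x := by
    intro z hz
    induction hz with
    | refl => rfl
    | tail h1 h2 ih =>
      subst ih
      rcases h2.2.2 with h | h
      · exact absurd h (hnb _ h2.1).1
      · exact absurd h (hnb _ h2.1).2
  by_cases hy : y = x
  · subst hy
    rw [if_pos ReflTransGen.refl, Function.update_self, Equiv.swap_apply_left]
  · rw [Function.update_of_ne hy, if_neg (fun h => hy (hr h))]

lemma kempeStep_flip {G : SimpleGraph V} (c : V → Fin k) (a b : Fin k) (v0 : V)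
    (h0 : c v0 = a ∨ c v0 = b) :
    KempeStep G k c
      (fun y => if ReflTransGen (krel G c a b) v0 y then Equiv.swap a b (c y) else c y) :=
  (kempeStep_iff G c _).mpr ⟨a, b, v0, h0, fun _ => rfl⟩

lemma kempeEquiv_of_edgeless [DecidableEq V] [Fintype V] {G : SimpleGraph V}
    (hE : ∀ p q : V, ¬ G.Adj p q) (c c' : V → Fin k) : KempeEquiv G k c c' := by
  have step : ∀ (f : V → Fin k) (x : V) (b : Fin k), KempeStep G k f (Function.update f x b) :=
    fun f x b => kempeStep_update x b (fun y hy => absurd hy (hE _ _))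
  have key : ∀ s : Finset V, KempeEquiv G k c (fun x => if x ∈ s then c' x else c x) := by
    intro s
    induction s using Finset.induction_on with
    | empty =>
      have : (fun x => if x ∈ (∅ : Finset V) then c' x else c x) = c := by
        funext y; simp
      rw [this]; exact Relation.ReflTransGen.refl
    | @insert a s ha ih =>
      refine ih.tail ?_
      have h2 := step (fun x => if x ∈ s then c' x else c x) a (c' a)
      have : Function.update (fun x => if x ∈ s then c' x else c x) a (c' a)
          = (fun x => if x ∈ insert a s then c' x else c x) := by
        funext y
        by_cases hy : y = a
        · subst hy; simp
        · simp [Function.update_of_ne hy, hy]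
      rwa [this] at h2
  have h := key Finset.univ
  have : (fun x => if x ∈ (Finset.univ : Finset V) then c' x else c x) = c' := by
    funext y; simp
  rwa [this] at h


section LVMsec
variable [Fintype V] [DecidableEq V]

lemma deleteVert_adj (G : SimpleGraph V) (v x y : V) :
    (G.deleteEdges {e | v ∈ e}).Adj x y ↔ G.Adj x y ∧ x ≠ v ∧ y ≠ v := by
  rw [SimpleGraph.deleteEdges_adj]
  simp only [Set.mem_setOf_eq, Sym2.mem_iff, not_or]
  constructor
  · rintro ⟨h, h1, h2⟩; exact ⟨h, fun e => h1 e.symm, fun e => h2 e.symm⟩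
  · rintro ⟨h, h1, h2⟩; exact ⟨h, fun e => h1 e.symm, fun e => h2 e.symm⟩

lemma krel_del_iff {G : SimpleGraph V} {v : V} {c γ : V → Fin k} {a b : Fin k}
    (hag : ∀ x, x ≠ v → c x = γ x) (p q : V) :
    krel (G.deleteEdges {e | v ∈ e}) γ a b p q ↔ krel G c a b p q ∧ p ≠ v ∧ q ≠ v := by
  unfold krel
  rw [deleteVert_adj]
  constructor
  · rintro ⟨⟨h, hp, hq⟩, m1, m2⟩
    refine ⟨⟨h, ?_, ?_⟩, hp, hq⟩
    · rw [hag p hp]; exact m1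
    · rw [hag q hq]; exact m2
  · rintro ⟨⟨h, m1, m2⟩, hp, hq⟩
    refine ⟨⟨h, hp, hq⟩, ?_, ?_⟩
    · rw [← hag p hp]; exact m1
    · rw [← hag q hq]; exact m2

lemma rtg_del_ne {G : SimpleGraph V} {v : V} {γ : V → Fin k} {a b : Fin k} {x0 p : V}
    (h : Relation.ReflTransGen (krel (G.deleteEdges {e | v ∈ e}) γ a b) x0 p)
    (hx0 : x0 ≠ v) : p ≠ v := by
  induction h with
  | refl => exact hx0
  | tail h1 h2 ih => exact ((deleteVert_adj G v _ _).mp h2.1).2.2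

lemma rtg_del_mono {G : SimpleGraph V} {v : V} {c γ : V → Fin k} {a b : Fin k}
    (hag : ∀ x, x ≠ v → c x = γ x) {x0 y : V}
    (h : Relation.ReflTransGen (krel (G.deleteEdges {e | v ∈ e}) γ a b) x0 y) :
    Relation.ReflTransGen (krel G c a b) x0 y := by
  induction h with
  | refl => exact .refl
  | tail h1 h2 ih => exact ih.tail ((krel_del_iff hag _ _).mp h2).1

lemma corr_noreach {G : SimpleGraph V} {v : V} {c γ : V → Fin k} {a b : Fin k}
    (hag : ∀ x, x ≠ v → c x = γ x) {x0 : V} (hx0 : x0 ≠ v)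
    (NR : ¬ Relation.ReflTransGen (krel G c a b) x0 v) (y : V) :
    Relation.ReflTransGen (krel (G.deleteEdges {e | v ∈ e}) γ a b) x0 y ↔
      Relation.ReflTransGen (krel G c a b) x0 y := by
  constructor
  · intro h
    induction h with
    | refl => exact .refl
    | tail h1 h2 ih => exact ih.tail ((krel_del_iff hag _ _).mp h2).1
  · intro h
    induction h with
    | refl => exact .refl
    | @tail p q h1 h2 ih =>
      have hp : p ≠ v := fun e => NR (e ▸ h1)
      have hq : q ≠ v := fun e => NR (e ▸ h1.tail h2)
      exact ih.tail ((krel_del_iff hag _ _).mpr ⟨h2, hp, hq⟩)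

lemma lift_step {G : SimpleGraph V} {v : V} {γ δ : V → Fin k}
    (hγδ : KempeStep (G.deleteEdges {e | v ∈ e}) k γ δ)
    {α : V → Fin k} (hα : IsProperColoring G k α)
    (hag : ∀ x, x ≠ v → α x = γ x)
    (hdegv : (G.neighborSet v).ncard ≤ k - 1) :
    ∃ δ' : V → Fin k, IsProperColoring G k δ' ∧ (∀ x, x ≠ v → δ' x = δ x) ∧
      KempeEquiv G k α δ' := by
  rw [kempeStep_iff] at hγδ
  obtain ⟨a, b, x0, hx0m, hf⟩ := hγδ
  by_cases hx0v : x0 = v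
  · -- trivial move at the isolated vertex
    subst hx0v
    have triv : ∀ {z : V}, Relation.ReflTransGen
        (krel (G.deleteEdges {e | x0 ∈ e}) γ a b) x0 z → z = x0 := by
      intro z hz
      induction hz with
      | refl => rfl
      | tail h1 h2 ih =>
        rw [ih] at h2
        exact absurd rfl ((deleteVert_adj G x0 _ _).mp h2.1).2.1
    refine ⟨α, hα, fun x hx => ?_, .refl⟩
    rw [hf x, if_neg (fun hr => hx (triv hr)), hag x hx]
  -- now x0 ≠ v
  have hx0c : α x0 = a ∨ α x0 = b := by rw [hag x0 hx0v]; exact hx0m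
  -- the "easy" one-step construction, given no chain from x0 reaches v
  have easy : ∀ (α' : V → Fin k), IsProperColoring G k α' → (∀ x, x ≠ v → α' x = γ x) →
      ¬ Relation.ReflTransGen (krel G α' a b) x0 v →
      ∃ δ' : V → Fin k, IsProperColoring G k δ' ∧ (∀ x, x ≠ v → δ' x = δ x) ∧
        KempeStep G k α' δ' := by
    intro α' hα' hag' NR
    have hx0c' : α' x0 = a ∨ α' x0 = b := by rw [hag' x0 hx0v]; exact hx0m
    refine ⟨_, kempeStep_proper (kempeStep_flip α' a b x0 hx0c') hα', fun x hx => ?_,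
      kempeStep_flip α' a b x0 hx0c'⟩
    rw [hf x]
    by_cases hr : Relation.ReflTransGen (krel G α' a b) x0 x
    · rw [if_pos hr, if_pos ((corr_noreach hag' hx0v NR x).mpr hr), hag' x hx]
    · rw [if_neg hr, if_neg (fun h => hr ((corr_noreach hag' hx0v NR x).mp h)), hag' x hx]
  by_cases hreach : Relation.ReflTransGen (krel G α a b) x0 v
  swap
  · obtain ⟨δ', h1, h2, h3⟩ := easy α hα hag hreach
    exact ⟨δ', h1, h2, .single h3⟩
  -- hard case: the chain from x0 reaches v
  have hmemv : α v = a ∨ α v = b := by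
    rcases rtg_mem hreach with h | h
    · exact absurd h.symm hx0v
    · exact h
  by_cases hfree : ∃ e : Fin k, e ∉ α '' (G.neighborSet v) ∧ e ≠ α v ∧ e ≠ a ∧ e ≠ b
  · -- recolour v away, then do the easy step
    obtain ⟨e, he1, he2, he3, he4⟩ := hfree
    have hupd : KempeStep G k α (Function.update α v e) := by
      apply kempeStep_update
      intro y hy
      refine ⟨(hα hy).symm, fun h => he1 ⟨y, hy, h⟩⟩
    have hα₁ : IsProperColoring G k (Function.update α v e) := kempeStep_proper hupd hα
    have hag₁ : ∀ x, x ≠ v → Function.update α v e x = γ x := fun x hx => by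
      rw [Function.update_of_ne hx]; exact hag x hx
    have NR₁ : ¬ Relation.ReflTransGen (krel G (Function.update α v e) a b) x0 v := by
      intro h
      rcases rtg_mem h with h' | h'
      · exact hx0v h'.symm
      · rw [Function.update_self] at h'
        rcases h' with h' | h'
        · exact he3 h'
        · exact he4 h'
    obtain ⟨δ', h1, h2, h3⟩ := easy (Function.update α v e) hα₁ hag₁ NR₁
    exact ⟨δ', h1, h2, (Relation.ReflTransGen.single hupd).tail h3⟩
  · -- no free colour: v has a unique neighbour coloured a or b
    push_neg at hfree
    -- obtain the last step of the chain into v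
    obtain ⟨p, hp1, hp2⟩ : ∃ p, Relation.ReflTransGen (krel G α a b) x0 p ∧ krel G α a b p v := by
      rcases (Relation.ReflTransGen.cases_tail hreach) with h | ⟨p, hp1, hp2⟩
      · exact absurd h.symm hx0v
      · exact ⟨p, hp1, hp2⟩
    have hpN : G.Adj v p ∧ (α p = a ∨ α p = b) := ⟨hp2.1.symm, hp2.2.1⟩
    -- uniqueness of the {a,b}-coloured neighbour of v
    have hsing : ∀ ⦃y z : V⦄, G.Adj v y → (α y = a ∨ α y = b) →
        G.Adj v z → (α z = a ∨ α z = b) → y = z := by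
      intro y z hy1 hy2 hz1 hz2
      by_contra hyz
      set A := G.neighborSet v with hA
      set B := A \ {w : V | α w = a ∨ α w = b} with hB
      have himB : (Set.univ \ {a, b} : Set (Fin k)) ⊆ α '' B := by
        intro f hf
        have hf1 : f ≠ a := fun h => hf.2 (by simp [h])
        have hf2 : f ≠ b := fun h => hf.2 (by simp [h])
        have hf3 : f ≠ α v := by
          rcases hmemv with h | h <;> rw [h] <;> assumption
        have hfim : f ∈ α '' A := by
          by_contra hfn
          exact hf2 (hfree f hfn hf3 hf1)
        obtain ⟨w, hw, hwe⟩ := hfim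
        refine ⟨w, ⟨hw, ?_⟩, hwe⟩
        intro hmem
        rcases hmem with h | h
        · exact hf1 (hwe ▸ h ▸ rfl)
        · exact hf2 (hwe ▸ h ▸ rfl)
      have hk1 : (k : ℕ) ≤ (Set.univ \ {a, b} : Set (Fin k)).ncard + 2 := by
        have h1 : (Set.univ : Set (Fin k)).ncard = k := by
          rw [Set.ncard_univ]; simp
        have h2 : (Set.univ : Set (Fin k)) ⊆ (Set.univ \ {a, b}) ∪ {a, b} := by
          intro f _
          by_cases hfab : f ∈ ({a, b} : Set (Fin k))
          · exact Or.inr hfab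
          · exact Or.inl ⟨trivial, hfab⟩
        calc (k : ℕ) = (Set.univ : Set (Fin k)).ncard := h1.symm
          _ ≤ ((Set.univ \ {a, b}) ∪ {a, b} : Set (Fin k)).ncard :=
              Set.ncard_le_ncard h2 (Set.toFinite _)
          _ ≤ (Set.univ \ {a, b} : Set (Fin k)).ncard + ({a, b} : Set (Fin k)).ncard :=
              Set.ncard_union_le _ _
          _ ≤ (Set.univ \ {a, b} : Set (Fin k)).ncard + 2 := by
              have := Set.ncard_insert_le a ({b} : Set (Fin k))
              have h3 := Set.ncard_singleton b
              omega
      have hk2 : (Set.univ \ {a, b} : Set (Fin k)).ncard ≤ B.ncard :=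
        le_trans (Set.ncard_le_ncard himB (Set.toFinite _)) (Set.ncard_image_le (Set.toFinite _))
      have hk3 : B.ncard + 2 ≤ A.ncard := by
        have hdisj : Disjoint B {y, z} := by
          rw [Set.disjoint_right]
          intro w hw
          rcases hw with h | h
          · subst h; exact fun hmem => hmem.2 hy2
          · rw [h]; exact fun hmem => hmem.2 hz2
        have hsub : B ∪ {y, z} ⊆ A := by
          intro w hw
          rcases hw with h | h
          · exact h.1
          · rcases h with h | h
            · subst h; exact hy1
            · rw [h]; exact hz1
        calc B.ncard + 2 = B.ncard + ({y, z} : Set V).ncard := by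
              rw [Set.ncard_pair hyz]
          _ = (B ∪ {y, z}).ncard := (Set.ncard_union_eq hdisj (Set.toFinite _) (Set.toFinite _)).symm
          _ ≤ A.ncard := Set.ncard_le_ncard hsub (Set.toFinite _)
      have hk0 : 0 < k := Fin.pos a
      omega
    -- p is THE special neighbour; case on whether x0 reaches p in G'
    by_cases hx : Relation.ReflTransGen (krel (G.deleteEdges {e | v ∈ e}) γ a b) x0 p
    · -- the whole G-component is the G'-component plus v
      have corrI : ∀ y, Relation.ReflTransGen (krel G α a b) x0 y ↔
          (y = v ∨ Relation.ReflTransGen (krel (G.deleteEdges {e | v ∈ e}) γ a b) x0 y) := by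
        intro y
        constructor
        · intro h
          induction h with
          | refl => exact Or.inr .refl
          | @tail q r h1 h2 ih =>
            by_cases hr : r = v
            · exact Or.inl hr
            · rcases ih with hqv | hq'
              · rw [hqv] at h2
                have hrN : G.Adj v r ∧ (α r = a ∨ α r = b) := ⟨h2.1, h2.2.2⟩
                have : r = p := hsing hrN.1 hrN.2 hpN.1 hpN.2
                exact Or.inr (this ▸ hx)
              · have hqv : q ≠ v := rtg_del_ne hq' hx0v
                exact Or.inr (hq'.tail ((krel_del_iff hag _ _).mpr ⟨h2, hqv, hr⟩))
        · intro h
          rcases h with h | h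
          · subst h
            exact (rtg_del_mono hag hx).tail hp2
          · exact rtg_del_mono hag h
      refine ⟨_, kempeStep_proper (kempeStep_flip α a b x0 hx0c) hα, fun x hxv => ?_,
        .single (kempeStep_flip α a b x0 hx0c)⟩
      rw [hf x]
      by_cases hr : Relation.ReflTransGen (krel G α a b) x0 x
      · rcases (corrI x).mp hr with h | h
        · exact absurd h hxv
        · rw [if_pos hr, if_pos h, hag x hxv]
      · rw [if_neg hr, if_neg (fun h => hr ((corrI x).mpr (Or.inr h))), hag x hxv]
    · -- chains from x0 cannot reach v at all: contradiction with hreach? No: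
      -- here chains from x0 in G do not reach v (they would have to go through p)
      exfalso
      have key : ∀ {y : V}, Relation.ReflTransGen (krel G α a b) x0 y →
          (y ≠ v ∧ Relation.ReflTransGen (krel (G.deleteEdges {e | v ∈ e}) γ a b) x0 y) ∨
            Relation.ReflTransGen (krel (G.deleteEdges {e | v ∈ e}) γ a b) x0 p := by
        intro y h
        induction h with
        | refl => exact Or.inl ⟨hx0v, .refl⟩
        | @tail q r h1 h2 ih =>
          rcases ih with ⟨hqv, hq'⟩ | h'
          · by_cases hr : r = v
            · rw [hr] at h2
              have hqN : G.Adj v q ∧ (α q = a ∨ α q = b) := ⟨h2.1.symm, h2.2.1⟩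
              have : q = p := hsing hqN.1 hqN.2 hpN.1 hpN.2
              exact Or.inr (this ▸ hq')
            · exact Or.inl ⟨hr, hq'.tail ((krel_del_iff hag _ _).mpr ⟨h2, hqv, hr⟩)⟩
          · exact Or.inr h'
      rcases key hreach with ⟨h, _⟩ | h
      · exact h rfl
      · exact hx h

theorem LVM : ∀ (n : ℕ) (G : SimpleGraph V), G.edgeSet.ncard ≤ n → Degenerate G (k-1) →
    ∀ c c' : V → Fin k, IsProperColoring G k c → IsProperColoring G k c' →
    KempeEquiv G k c c' := by
  intro n
  induction n with
  | zero =>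
    intro G hG hdegn c c' hc hc'
    have hE : ∀ p q : V, ¬ G.Adj p q := by
      intro p q hpq
      have h0 : G.edgeSet = ∅ := by
        rw [← Set.ncard_eq_zero (Set.toFinite _)]; omega
      exact Set.eq_empty_iff_forall_notMem.mp h0 _ (G.mem_edgeSet.mpr hpq)
    exact kempeEquiv_of_edgeless hE c c'
  | succ n ih =>
    intro G hG hdegn c c' hc hc'
    by_cases hE : ∀ p q : V, ¬ G.Adj p q
    · exact kempeEquiv_of_edgeless hE c c'
    push_neg at hE
    obtain ⟨x1, y1, hx1y1⟩ := hE
    set S := {x : V | ∃ y, G.Adj x y} with hS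
    obtain ⟨v, hvS, hvdeg⟩ := hdegn S ⟨x1, ⟨y1, hx1y1⟩⟩
    have hsub : G.neighborSet v ⊆ S := fun y hy => ⟨v, hy.symm⟩
    have hvdeg' : (G.neighborSet v).ncard ≤ k - 1 := by
      rwa [Set.inter_eq_self_of_subset_right hsub] at hvdeg
    obtain ⟨y0, hy0⟩ := hvS
    set G' := G.deleteEdges {e | v ∈ e} with hG'
    have hadj' : ∀ x y, G'.Adj x y ↔ G.Adj x y ∧ x ≠ v ∧ y ≠ v := deleteVert_adj G v
    have hedge : G'.edgeSet.ncard ≤ n := by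
      have hss : G'.edgeSet ⊂ G.edgeSet := by
        constructor
        · intro e he
          rw [hG', SimpleGraph.edgeSet_deleteEdges] at he
          exact he.1
        · intro hsup
          have h1 : s(v, y0) ∈ G'.edgeSet := hsup (G.mem_edgeSet.mpr hy0)
          rw [SimpleGraph.mem_edgeSet, hadj'] at h1
          exact h1.2.1 rfl
      have := Set.ncard_lt_ncard hss (Set.toFinite _)
      omega
    have hdegn' : Degenerate G' (k-1) := by
      intro T hT
      by_cases hvT : v ∈ T
      · refine ⟨v, hvT, ?_⟩
        have h0 : T ∩ G'.neighborSet v = ∅ := by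
          ext y
          simp only [Set.mem_inter_iff, SimpleGraph.mem_neighborSet, hadj',
            Set.mem_empty_iff_false, iff_false]
          tauto
        rw [h0]; simp
      · obtain ⟨w, hwT, hw⟩ := hdegn T hT
        refine ⟨w, hwT, le_trans (Set.ncard_le_ncard ?_ (Set.toFinite _)) hw⟩
        intro y hy
        exact ⟨hy.1, ((hadj' w y).mp hy.2).1⟩
    have hIH : KempeEquiv G' k c c' := ih G' hedge hdegn' c c'
      (fun p q h => hc ((hadj' p q).mp h).1) (fun p q h => hc' ((hadj' p q).mp h).1)
    have main : ∀ δ, KempeEquiv G' k c δ → ∃ δ' : V → Fin k, IsProperColoring G k δ' ∧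
        (∀ x, x ≠ v → δ' x = δ x) ∧ KempeEquiv G k c δ' := by
      intro δ h
      induction h with
      | refl => exact ⟨c, hc, fun _ _ => rfl, .refl⟩
      | @tail γ δ h1 h2 ih2 =>
        obtain ⟨α, hαp, hαag, hαe⟩ := ih2
        obtain ⟨δ', h1', h2', h3'⟩ := lift_step h2 hαp hαag hvdeg'
        exact ⟨δ', h1', h2', hαe.trans h3'⟩
    obtain ⟨β, hβp, hβag, hβe⟩ := main c' hIH
    by_cases hfin : β v = c' v
    · have hbc : β = c' := by
        funext x
        by_cases hx : x = v
        · rw [hx]; exact hfin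
        · exact hβag x hx
      exact hbc ▸ hβe
    · have hstep : KempeStep G k β (Function.update β v (c' v)) := by
        apply kempeStep_update
        intro y hy
        refine ⟨(hβp hy).symm, ?_⟩
        rw [hβag y hy.ne']
        exact (hc' hy).symm
      have hupdeq : Function.update β v (c' v) = c' := by
        funext x
        by_cases hx : x = v
        · rw [hx, Function.update_self]
        · rw [Function.update_of_ne hx]; exact hβag x hx
      exact hβe.tail (hupdeq ▸ hstep)


section Contract
variable [Fintype V] [DecidableEq V]

lemma rtg_congr {r s : V → V → Prop} (h : ∀ p q, r p q ↔ s p q) {x y : V} :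
    Relation.ReflTransGen r x y ↔ Relation.ReflTransGen s x y := by
  constructor
  · intro hr
    induction hr with
    | refl => exact .refl
    | tail h1 h2 ih => exact ih.tail ((h _ _).mp h2)
  · intro hr
    induction hr with
    | refl => exact .refl
    | tail h1 h2 ih => exact ih.tail ((h _ _).mpr h2)

lemma rtg_krel_symm {G : SimpleGraph V} {c : V → Fin k} {a b : Fin k} {x y : V}
    (h : Relation.ReflTransGen (krel G c a b) x y) :
    Relation.ReflTransGen (krel G c a b) y x :=
  (@Relation.ReflTransGen.symmetric _ _ ⟨fun _ _ hpq => krel_symm hpq⟩).symm _ _ h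

lemma flip_memb {c : V → Fin k} {a b : Fin k} (c1 : V → Fin k)
    (hc1 : ∀ x, c1 x = c x ∨ c1 x = Equiv.swap a b (c x)) (p : V) :
    (c1 p = a ∨ c1 p = b) ↔ (c p = a ∨ c p = b) := by
  rcases hc1 p with h | h
  · rw [h]
  · rw [h]
    constructor
    · intro hm
      have := swap_mem (x := Equiv.swap a b (c p)) hm
      rwa [Equiv.swap_apply_self] at this
    · exact swap_mem

def conG (G : SimpleGraph V) (u v : V) : SimpleGraph V where
  Adj x y := x ≠ y ∧ x ≠ v ∧ y ≠ v ∧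
    (G.Adj x y ∨ (x = u ∧ G.Adj v y) ∨ (y = u ∧ G.Adj v x))
  symm := by
    constructor
    rintro x y ⟨h1, h2, h3, h4⟩
    refine ⟨h1.symm, h3, h2, ?_⟩
    rcases h4 with h | h | h
    · exact Or.inl h.symm
    · exact Or.inr (Or.inr ⟨h.1, h.2⟩)
    · exact Or.inr (Or.inl ⟨h.1, h.2⟩)
  loopless := ⟨fun x h => h.1 rfl⟩

def phiC (u v : V) (c : V → Fin k) : V → Fin k := fun x => if x = v then c u else c x

lemma phiC_ne {u v : V} {c : V → Fin k} {x : V} (hx : x ≠ v) : phiC u v c x = c x :=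
  if_neg hx

lemma phiC_v {u v : V} {c : V → Fin k} : phiC u v c v = c u := if_pos rfl

lemma phiC_self {u v : V} {c : V → Fin k} (h : c u = c v) : phiC u v c = c := by
  funext x
  by_cases hx : x = v
  · rw [hx, phiC_v, h]
  · exact phiC_ne hx

variable {G : SimpleGraph V} {u v : V}

lemma proper_con (hc : IsProperColoring G k c) (hcu : c u = c v) :
    IsProperColoring (conG G u v) k c := by
  rintro x y ⟨h1, h2, h3, hcl⟩
  rcases hcl with h | h | h
  · exact hc h
  · rw [h.1, hcu]; exact hc h.2
  · rw [h.1, hcu]; exact fun e => (hc h.2) e.symm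

/-- push a `G`-chain to an `H`-chain through the contraction map. -/
lemma con_push (hne : u ≠ v) {ch : V → Fin k} {a b : Fin k} {x y : V}
    (h : Relation.ReflTransGen (krel G (phiC u v ch) a b) x y) :
    Relation.ReflTransGen (krel (conG G u v) ch a b)
      (if x = v then u else x) (if y = v then u else y) := by
  induction h with
  | refl => exact .refl
  | @tail q r h1 h2 ih =>
    set c := phiC u v ch with hc
    have step : krel (conG G u v) ch a b (if q = v then u else q) (if r = v then u else r)
        ∨ (if q = v then u else q) = (if r = v then u else r) := by
      obtain ⟨hadj, mq, mr⟩ := h2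
      by_cases hqv : q = v <;> by_cases hrv : r = v
      · right; rw [if_pos hqv, if_pos hrv]
      · rw [if_pos hqv, if_neg hrv]
        by_cases hru : r = u
        · right; rw [hru]
        · left
          refine ⟨⟨fun e => hru e.symm, hne, hrv, Or.inr (Or.inl ⟨rfl, hqv ▸ hadj⟩)⟩, ?_, ?_⟩
          · rwa [hqv, hc, phiC_v] at mq
          · rwa [hc, phiC_ne hrv] at mr
      · rw [if_neg hqv, if_pos hrv]
        by_cases hqu : q = u
        · right; rw [hqu]
        · left
          refine ⟨⟨hqu, hqv, hne, Or.inr (Or.inr ⟨rfl, (hrv ▸ hadj).symm⟩)⟩, ?_, ?_⟩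
          · rwa [hc, phiC_ne hqv] at mq
          · rwa [hrv, hc, phiC_v] at mr
      · rw [if_neg hqv, if_neg hrv]
        left
        refine ⟨⟨hadj.ne, hqv, hrv, Or.inl hadj⟩, ?_, ?_⟩
        · rwa [hc, phiC_ne hqv] at mq
        · rwa [hc, phiC_ne hrv] at mr
    rcases step with h | h
    · exact ih.tail h
    · exact h ▸ ih

/-- lift an `H`-chain back to `G`-chains. -/
lemma con_forward {ch : V → Fin k} {a b : Fin k} {x0 : V} (hx0 : x0 ≠ v) :
    ∀ {y : V}, Relation.ReflTransGen (krel (conG G u v) ch a b) x0 y →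
      Relation.ReflTransGen (krel G (phiC u v ch) a b) x0 y ∨
      Relation.ReflTransGen (krel G (phiC u v ch) a b) u y ∨
      Relation.ReflTransGen (krel G (phiC u v ch) a b) v y := by
  intro y h
  set c := phiC u v ch with hc
  induction h with
  | refl => exact Or.inl .refl
  | @tail q r h1 h2 ih =>
    obtain ⟨⟨hne', hqv, hrv, hcl⟩, mq, mr⟩ := h2
    have mq' : c q = a ∨ c q = b := by rwa [hc, phiC_ne hqv]
    have mr' : c r = a ∨ c r = b := by rwa [hc, phiC_ne hrv]
    rcases hcl with hadj | ⟨hqu, hadj⟩ | ⟨hru, hadj⟩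
    · have step : krel G c a b q r := ⟨hadj, mq', mr'⟩
      rcases ih with h | h | h
      · exact Or.inl (h.tail step)
      · exact Or.inr (Or.inl (h.tail step))
      · exact Or.inr (Or.inr (h.tail step))
    · -- q = u, edge comes from v
      have mv : c v = a ∨ c v = b := by rw [hc, phiC_v, ← hqu]; exact mq
      exact Or.inr (Or.inr (Relation.ReflTransGen.single ⟨hadj, mv, mr'⟩))
    · -- r = u
      exact Or.inr (Or.inl (hru ▸ Relation.ReflTransGen.refl))


lemma con_lift_step (hne : u ≠ v) {ch ch' : V → Fin k}
    (h : KempeStep (conG G u v) k ch ch') :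
    KempeEquiv G k (phiC u v ch) (phiC u v ch') := by
  rw [kempeStep_iff] at h
  obtain ⟨a, b, x0, hx0m, hf⟩ := h
  set c := phiC u v ch with hc
  set H := conG G u v with hH
  by_cases hx0v : x0 = v
  · -- the base vertex is the spare isolated vertex: nothing happens
    have triv : ∀ {z : V}, Relation.ReflTransGen (krel H ch a b) x0 z → z = x0 := by
      intro z hz
      induction hz with
      | refl => rfl
      | tail h1 h2 ih =>
        rw [ih] at h2
        obtain ⟨⟨_, hxv, _, _⟩, _, _⟩ := h2
        exact absurd hx0v hxv
    have hphi : phiC u v ch' = phiC u v ch := by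
      funext x
      by_cases hx : x = v
      · rw [hx, phiC_v, phiC_v, hf u, if_neg (fun h => hne ((triv h).trans hx0v))]
      · rw [phiC_ne hx, phiC_ne hx, hf x, if_neg (fun h => hx ((triv h).trans hx0v))]
    rw [hphi, ← hc]
    exact Relation.ReflTransGen.refl
  · have hx0c : c x0 = a ∨ c x0 = b := by rw [hc, phiC_ne hx0v]; exact hx0m
    by_cases hur : Relation.ReflTransGen (krel H ch a b) x0 u
    case neg =>
      have bwd : ∀ {y}, Relation.ReflTransGen (krel H ch a b) x0 y →
          y ≠ u ∧ Relation.ReflTransGen (krel G c a b) x0 y := by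
        intro y h
        induction h with
        | refl =>
          refine ⟨fun e => hur ?_, .refl⟩
          rw [← e]
        | @tail q r h1 h2 ih =>
          have hru : r ≠ u := fun e => hur (e ▸ (h1.tail h2))
          obtain ⟨⟨hne', hqv, hrv, hcl⟩, mq, mr⟩ := h2
          rcases hcl with hadj | ⟨hqu, _⟩ | ⟨hru', _⟩
          · refine ⟨hru, ih.2.tail ⟨hadj, ?_, ?_⟩⟩
            · rwa [hc, phiC_ne hqv]
            · rwa [hc, phiC_ne hrv]
          · exact absurd hqu ih.1
          · exact absurd hru' hru
      have fwd : ∀ {y}, y ≠ v → Relation.ReflTransGen (krel G c a b) x0 y →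
          Relation.ReflTransGen (krel H ch a b) x0 y := by
        intro y hyv h
        have h2 := con_push hne (G := G) h
        rwa [if_neg hx0v, if_neg hyv] at h2
      have NRv : ¬ Relation.ReflTransGen (krel G c a b) x0 v := by
        intro h
        have h2 := con_push hne (G := G) h
        rw [if_neg hx0v, if_pos rfl] at h2
        exact hur h2
      refine Relation.ReflTransGen.single ((kempeStep_iff G c _).mpr ⟨a, b, x0, hx0c, fun y => ?_⟩)
      by_cases hx : y = v
      · rw [hx, phiC_v, hf u, if_neg hur, if_neg NRv, hc, phiC_v]
      · rw [phiC_ne hx, hf y]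
        by_cases hr : Relation.ReflTransGen (krel G c a b) x0 y
        · rw [if_pos hr, if_pos (fwd hx hr), hc, phiC_ne hx]
        · rw [if_neg hr, if_neg (fun h => hr (bwd h).2), hc, phiC_ne hx]
    case pos =>
      have hcu : ch u = a ∨ ch u = b := by
        rcases rtg_mem hur with h | h
        · rw [h]; exact hx0m
        · exact h
      have hmv : c v = a ∨ c v = b := by rw [hc, phiC_v]; exact hcu
      have hmu : c u = a ∨ c u = b := by rw [hc, phiC_ne hne]; exact hcu
      have hx0side : Relation.ReflTransGen (krel G c a b) x0 u ∨
          Relation.ReflTransGen (krel G c a b) x0 v := by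
        have h1 : Relation.ReflTransGen (krel H ch a b) u x0 := rtg_krel_symm hur
        rcases con_forward (G := G) (u := u) hne h1 with h2 | h2 | h2
        · exact Or.inl (rtg_krel_symm h2)
        · exact Or.inl (rtg_krel_symm h2)
        · exact Or.inr (rtg_krel_symm h2)
      have cover : ∀ {y}, Relation.ReflTransGen (krel H ch a b) x0 y →
          Relation.ReflTransGen (krel G c a b) u y ∨
          Relation.ReflTransGen (krel G c a b) v y := by
        intro y h
        rcases con_forward (G := G) (u := u) hx0v h with h1 | h1 | h1
        · rcases hx0side with h2 | h2
          · exact Or.inl ((rtg_krel_symm h2).trans h1)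
          · exact Or.inr ((rtg_krel_symm h2).trans h1)
        · exact Or.inl h1
        · exact Or.inr h1
      have K2u : ∀ {y}, y ≠ v → Relation.ReflTransGen (krel G c a b) u y →
          Relation.ReflTransGen (krel H ch a b) x0 y := by
        intro y hyv h
        have h2 := con_push hne (G := G) h
        rw [if_neg hne, if_neg hyv] at h2
        exact hur.trans h2
      have K2v : ∀ {y}, y ≠ v → Relation.ReflTransGen (krel G c a b) v y →
          Relation.ReflTransGen (krel H ch a b) x0 y := by
        intro y hyv h
        have h2 := con_push hne (G := G) h
        rw [if_pos rfl, if_neg hyv] at h2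
        exact hur.trans h2
      by_cases hDuv : Relation.ReflTransGen (krel G c a b) u v
      · -- single Kempe move at u
        refine Relation.ReflTransGen.single ((kempeStep_iff G c _).mpr ⟨a, b, u, hmu, fun y => ?_⟩)
        by_cases hx : y = v
        · rw [hx, phiC_v, hf u, if_pos hur, if_pos hDuv, hc, phiC_v]
        · rw [phiC_ne hx, hf y]
          by_cases hr : Relation.ReflTransGen (krel G c a b) u y
          · rw [if_pos hr, if_pos (K2u hx hr), hc, phiC_ne hx]
          · have hnr : ¬ Relation.ReflTransGen (krel H ch a b) x0 y := by
              intro h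
              rcases cover h with h1 | h1
              · exact hr h1
              · exact hr (hDuv.trans h1)
            rw [if_neg hr, if_neg hnr, hc, phiC_ne hx]
      · -- two Kempe moves: at u, then at v
        obtain ⟨c1, hc1⟩ : ∃ c1 : V → Fin k, ∀ y, c1 y =
            if Relation.ReflTransGen (krel G c a b) u y then Equiv.swap a b (c y) else c y :=
          ⟨_, fun _ => rfl⟩
        have hstep1 : KempeStep G k c c1 := (kempeStep_iff G c c1).mpr ⟨a, b, u, hmu, hc1⟩
        have hmemiff : ∀ p, (c1 p = a ∨ c1 p = b) ↔ (c p = a ∨ c p = b) := by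
          apply flip_memb
          intro x
          rw [hc1 x]
          by_cases hr : Relation.ReflTransGen (krel G c a b) u x
          · rw [if_pos hr]; exact Or.inr rfl
          · rw [if_neg hr]; exact Or.inl rfl
        have hreliff : ∀ p q, krel G c1 a b p q ↔ krel G c a b p q := by
          intro p q
          unfold krel
          rw [hmemiff p, hmemiff q]
        have hdisj : ∀ {y}, Relation.ReflTransGen (krel G c a b) u y →
            Relation.ReflTransGen (krel G c a b) v y → False := fun h1 h2 =>
          hDuv (h1.trans (rtg_krel_symm h2))
        have hm1v : c1 v = a ∨ c1 v = b := by
          rw [hc1 v, if_neg hDuv]; exact hmv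
        have hstep2 : KempeStep G k c1 (phiC u v ch') := by
          refine (kempeStep_iff G c1 _).mpr ⟨a, b, v, hm1v, fun y => ?_⟩
          have hcond : Relation.ReflTransGen (krel G c1 a b) v y ↔
              Relation.ReflTransGen (krel G c a b) v y := rtg_congr hreliff
          by_cases hx : y = v
          · rw [hx, phiC_v, hf u, if_pos hur, if_pos (Relation.ReflTransGen.refl), hc1 v,
              if_neg hDuv, hc, phiC_v]
          · rw [phiC_ne hx, hf y]
            by_cases hr2 : Relation.ReflTransGen (krel G c a b) v y
            · rw [if_pos (hcond.mpr hr2), if_pos (K2v hx hr2), hc1 y,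
                if_neg (fun h => hdisj h hr2), hc, phiC_ne hx]
            · rw [if_neg (fun h => hr2 (hcond.mp h)), hc1 y]
              by_cases hr1 : Relation.ReflTransGen (krel G c a b) u y
              · rw [if_pos hr1, if_pos (K2u hx hr1), hc, phiC_ne hx]
              · have hnr : ¬ Relation.ReflTransGen (krel H ch a b) x0 y := by
                  intro h
                  rcases cover h with h1 | h1
                  · exact hr1 h1
                  · exact hr2 h1
                rw [if_neg hr1, if_neg hnr, hc, phiC_ne hx]
        exact Relation.ReflTransGen.tail (Relation.ReflTransGen.single hstep1) hstep2


lemma ncard_neighborSet (G : SimpleGraph V) [DecidableRel G.Adj] (w : V) :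
    (G.neighborSet w).ncard = G.degree w := by
  rw [Set.ncard_eq_toFinset_card', Set.toFinset_card]
  exact G.card_neighborSet_eq_degree w

lemma exists_boundary {W : Type*} {Γ : SimpleGraph W} (h : Γ.Connected) (T : Set W)
    (p0 q0 : W) (hp0 : p0 ∈ T) (hq0 : q0 ∉ T) :
    ∃ p ∈ T, ∃ q, q ∉ T ∧ Γ.Adj p q := by
  obtain ⟨w⟩ := h.preconnected p0 q0
  have key : ∀ {x y : W} (_ : Γ.Walk x y), x ∈ T → y ∉ T →
      ∃ p ∈ T, ∃ q, q ∉ T ∧ Γ.Adj p q := by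
    intro x y w
    induction w with
    | nil => intro hx hy; exact absurd hx hy
    | @cons x z y hadj w ih =>
      intro hx hy
      by_cases hz : z ∈ T
      · exact ih hz hy
      · exact ⟨x, hx, z, hz, hadj⟩
  exact key w hp0 hq0

lemma conG_degenerate {G : SimpleGraph V} [DecidableRel G.Adj] {u v : V}
    (hne : u ≠ v) (huv : ¬ G.Adj u v) (h3c : ThreeConnected G)
    (hdeg : ∀ w : V, G.degree w ≤ k) (w0 : V) (hw1 : G.Adj u w0) (hw2 : G.Adj v w0) :
    Degenerate (conG G u v) (k - 1) := by
  intro Ssub hSne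
  set H := conG G u v with hH
  by_cases hvS : v ∈ Ssub
  · refine ⟨v, hvS, ?_⟩
    have h0 : Ssub ∩ H.neighborSet v = ∅ := by
      ext y
      simp only [Set.mem_inter_iff, Set.mem_empty_iff_false, iff_false, not_and]
      intro _ hy
      obtain ⟨-, h2, -, -⟩ := hy
      exact h2 rfl
    rw [h0, Set.ncard_empty]
    exact Nat.zero_le _
  set T := Ssub \ {u} with hT
  by_cases hTne : T.Nonempty
  case neg =>
    obtain ⟨s0, hs0⟩ := hSne
    have hs0u : s0 = u := by
      by_contra h
      exact hTne ⟨s0, hs0, h⟩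
    refine ⟨u, hs0u ▸ hs0, ?_⟩
    have hsub : Ssub ∩ H.neighborSet u ⊆ (∅ : Set V) := by
      rintro y ⟨hy1, hy2⟩
      obtain ⟨hne', -, -, -⟩ := hy2
      by_cases h : y = u
      · exact hne' h.symm
      · exact hTne ⟨y, hy1, h⟩
    have := Set.ncard_le_ncard hsub (Set.toFinite _)
    rw [Set.ncard_empty] at this
    omega
  case pos =>
    have hTuv : ∀ x ∈ T, x ≠ u ∧ x ≠ v := fun x hx => ⟨hx.2, fun e => hvS (e ▸ hx.1)⟩
    have hw0u : w0 ≠ u := fun e => G.loopless.irrefl u (e ▸ hw1)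
    have hw0v : w0 ≠ v := fun e => G.loopless.irrefl v (e ▸ hw2)
    by_cases hfull : ∀ x, x ≠ u → x ≠ v → x ∈ Ssub
    · have hw0S : w0 ∈ Ssub := hfull w0 hw0u hw0v
      refine ⟨w0, hw0S, ?_⟩
      have hsub : Ssub ∩ H.neighborSet w0 ⊆ G.neighborSet w0 \ {v} := by
        rintro y ⟨-, hy⟩
        obtain ⟨hne', hwv', hyv, hcl⟩ := hy
        refine ⟨?_, hyv⟩
        rcases hcl with h | ⟨h1, h2⟩ | ⟨h1, h2⟩
        · exact h
        · exact absurd h1 hw0u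
        · rw [h1]; exact hw1.symm
      have h1 : (G.neighborSet w0 \ {v}).ncard < (G.neighborSet w0).ncard :=
        Set.ncard_diff_singleton_lt_of_mem hw2.symm (Set.toFinite _)
      have h2 : (G.neighborSet w0).ncard ≤ k := by
        rw [ncard_neighborSet]; exact hdeg w0
      have h3 := Set.ncard_le_ncard hsub (Set.toFinite _)
      omega
    · push_neg at hfull
      obtain ⟨x1, hx1u, hx1v, hx1S⟩ := hfull
      set Sc : Set V := ({u, v} : Set V)ᶜ with hSc
      have hmemSc : ∀ z : V, z ≠ u → z ≠ v → z ∈ Sc := by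
        intro z h1 h2 h
        rw [Set.mem_insert_iff, Set.mem_singleton_iff] at h
        rcases h with h | h
        · exact h1 h
        · exact h2 h
      have hconn : (G.induce Sc).Connected := by
        apply h3c.2
        have h0 : ({u, v} : Set V).ncard = 2 := Set.ncard_pair hne
        omega
      obtain ⟨t0, ht0⟩ := hTne
      have ht0' : t0 ∈ Sc := hmemSc t0 (hTuv t0 ht0).1 (hTuv t0 ht0).2
      have hx1' : x1 ∈ Sc := hmemSc x1 hx1u hx1v
      have hx1T : (⟨x1, hx1'⟩ : Sc) ∉ {z : Sc | (z : V) ∈ T} := by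
        intro h
        exact hx1S h.1
      obtain ⟨p, hp, q, hq, hpq⟩ := exists_boundary hconn
        {z : Sc | (z : V) ∈ T} ⟨t0, ht0'⟩ ⟨x1, hx1'⟩ ht0 hx1T
      -- unpack
      have hpT : (p : V) ∈ T := hp
      have hpu : (p : V) ≠ u := (hTuv _ hpT).1
      have hpv : (p : V) ≠ v := (hTuv _ hpT).2
      have hquv : (q : V) ≠ u ∧ (q : V) ≠ v := by
        have h2 : (q : V) ∉ ({u, v} : Set V) := q.2
        rw [Set.mem_insert_iff, Set.mem_singleton_iff] at h2
        push_neg at h2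
        exact h2
      have hqu : (q : V) ≠ u := hquv.1
      have hqv : (q : V) ≠ v := hquv.2
      have hqS : (q : V) ∉ Ssub := fun h => hq ⟨h, hqu⟩
      have hadjpq : G.Adj (p : V) (q : V) := hpq
      have hqN : (q : V) ∈ G.neighborSet (p : V) := hadjpq
      refine ⟨(p : V), hpT.1, ?_⟩
      by_cases hcase : H.Adj (p : V) u ∧ ¬ G.Adj (p : V) u
      · -- the contracted edge towards u is not a G-edge, so v is a G-neighbour of p
        have hGv : G.Adj (p : V) v := by
          obtain ⟨hH1, hH2⟩ := hcase
          obtain ⟨-, -, -, hcl⟩ := hH1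
          rcases hcl with h | ⟨h1, h2⟩ | ⟨h1, h2⟩
          · exact absurd h hH2
          · exact absurd h1 hpu
          · exact h2.symm
        have hsub : Ssub ∩ H.neighborSet (p : V) ⊆
            ((G.neighborSet (p : V) \ {v}) ∪ {u}) \ {(q : V)} := by
          rintro z ⟨hz1, hz2⟩
          obtain ⟨hne', hpv', hzv, hcl⟩ := hz2
          refine ⟨?_, fun e => hqS (e ▸ hz1)⟩
          rcases hcl with h | ⟨h1, h2⟩ | ⟨h1, h2⟩
          · exact Or.inl ⟨h, hzv⟩
          · exact absurd h1 hpu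
          · exact Or.inr h1
        have hx_mem : (q : V) ∈ (G.neighborSet (p : V) \ {v}) ∪ {u} :=
          Or.inl ⟨hqN, hqv⟩
        have n1 := Set.ncard_le_ncard hsub (Set.toFinite _)
        have n2 := Set.ncard_diff_singleton_lt_of_mem hx_mem (Set.toFinite _)
        have n3 := Set.ncard_union_le (G.neighborSet (p : V) \ {v}) ({u} : Set V)
        have hvN : v ∈ G.neighborSet (p : V) := hGv
        have n4 := Set.ncard_diff_singleton_lt_of_mem hvN (Set.toFinite _)
        have n5 : (G.neighborSet (p : V)).ncard ≤ k := by
          rw [ncard_neighborSet]; exact hdeg _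
        have n6 : ({u} : Set V).ncard = 1 := Set.ncard_singleton u
        omega
      · have hsub : Ssub ∩ H.neighborSet (p : V) ⊆
            G.neighborSet (p : V) \ {(q : V)} := by
          rintro z ⟨hz1, hz2⟩
          have hz2' := hz2
          obtain ⟨hne', hpv', hzv, hcl⟩ := hz2
          refine ⟨?_, fun e => hqS (e ▸ hz1)⟩
          rcases hcl with h | ⟨h1, h2⟩ | ⟨h1, h2⟩
          · exact h
          · exact absurd h1 hpu
          · -- z = u and the edge p-u exists in H; by ¬hcase it is a G-edge
            rw [h1]
            rw [h1] at hz2'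
            by_contra hGu
            exact hcase ⟨hz2', hGu⟩
        have n1 := Set.ncard_le_ncard hsub (Set.toFinite _)
        have n2 := Set.ncard_diff_singleton_lt_of_mem hqN (Set.toFinite _)
        have n5 : (G.neighborSet (p : V)).ncard ≤ k := by
          rw [ncard_neighborSet]; exact hdeg _
        omega

end Contract
end LVMsec
end KempeAux

/-- for `k ≥ 3` and a 3-connected graph `G` of maximum degree at most
`k`, with `u, v` non-adjacent vertices having a common neighbour, any two proper
`k`-colourings giving `u` and `v` the same colour are Kempe equivalent. -/
theorem stmt6 {V : Type*} [Fintype V] [DecidableEq V] (k : ℕ) (hk : 3 ≤ k)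
    (G : SimpleGraph V) [DecidableRel G.Adj] (h3c : ThreeConnected G)
    (hdeg : ∀ w : V, G.degree w ≤ k)
    (u v : V) (hne : u ≠ v) (huv : ¬ G.Adj u v)
    (hcommon : ∃ w : V, G.Adj u w ∧ G.Adj v w) :
    ∀ c c' : V → Fin k, IsProperColoring G k c → IsProperColoring G k c' →
      c u = c v → c' u = c' v → KempeEquiv G k c c' := by
  intro c c' hc hc' hcuv hcuv'
  obtain ⟨w0, hw1, hw2⟩ := hcommon
  have hdegH : Degenerate (KempeAux.conG G u v) (k - 1) :=
    KempeAux.conG_degenerate hne huv h3c hdeg w0 hw1 hw2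
  have hH : KempeEquiv (KempeAux.conG G u v) k c c' :=
    KempeAux.LVM ((KempeAux.conG G u v).edgeSet.ncard) (KempeAux.conG G u v) le_rfl hdegH c c'
      (KempeAux.proper_con hc hcuv) (KempeAux.proper_con hc' hcuv')
  have main : ∀ δ, KempeEquiv (KempeAux.conG G u v) k c δ →
      KempeEquiv G k c (KempeAux.phiC u v δ) := by
    intro δ h
    induction h with
    | refl => rw [KempeAux.phiC_self hcuv]; exact Relation.ReflTransGen.refl
    | tail h1 h2 ih => exact ih.trans (KempeAux.con_lift_step hne h2)
  have h2 := main c' hH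
  rwa [KempeAux.phiC_self hcuv'] at h2
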